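/- Let Γ₀ be a countable set (a countable group Γ) endowed with a probability measure μ₀ of full support, let X be a countable set on which a group A acts with all orbits infinite, and let Y = Γ₀^X carry the product measure. Then the generalized Bernoulli shift action of A on Y, (a·y)(x) = y(a⁻¹·x), is measure-preserving and ergodic. -/

import Mathlib

open MeasureTheory Set
open scoped Pointwise symmDiff

section BernoulliAux

theorem aux_neumann {A : Type*} [Group A] {X : Type*} [MulAction A X]
    (horb : ∀ x : X, (MulAction.orbit A x).Infinite) (F : Finset X) :
    ∃ a : A, ∀ x ∈ F, a • x ∉ F := by
  classical
  by_contra hcon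
  push_neg at hcon
  set g : X × X → A := fun p => if h : ∃ a : A, a • p.1 = p.2 then h.choose else 1 with hg
  have hcovers : ⋃ p ∈ F ×ˢ F, (g p) • ((MulAction.stabilizer A p.1 : Subgroup A) : Set A)
      = Set.univ := by
    ext a
    simp only [Set.mem_iUnion, Set.mem_univ, iff_true]
    obtain ⟨x, hx, hax⟩ := hcon a
    refine ⟨(x, a • x), Finset.mem_product.mpr ⟨hx, hax⟩, ?_⟩
    have hex : ∃ b : A, b • (x, a • x).1 = (x, a • x).2 := ⟨a, rfl⟩
    have hgp : g (x, a • x) • x = a • x := by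
      rw [hg]; simp only [dif_pos hex]; exact hex.choose_spec
    rw [mem_leftCoset_iff, SetLike.mem_coe, MulAction.mem_stabilizer_iff]
    show ((g (x, a • x))⁻¹ * a) • x = x
    rw [mul_smul, inv_smul_eq_iff, hgp]
  obtain ⟨p, hp, hfin⟩ := Subgroup.exists_finiteIndex_of_leftCoset_cover hcovers
  have : (MulAction.stabilizer A p.1).index = 0 := by
    rw [MulAction.index_stabilizer]
    exact Set.Infinite.ncard (horb p.1)
  exact hfin.index_ne_zero this

variable {Γ₀ : Type*} [MeasurableSpace Γ₀] [MeasurableSingletonClass Γ₀]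
  {X : Type*} {μ₀ : Measure Γ₀} {μ : Measure (X → Γ₀)}

/-- The finite-dimensional cylinder measure property of the product measure. -/
def CylProp (μ₀ : Measure Γ₀) (μ : Measure (X → Γ₀)) : Prop :=
  ∀ (F : Finset X) (t : X → Set Γ₀), (∀ x, MeasurableSet (t x)) →
      μ {y : X → Γ₀ | ∀ x ∈ F, y x ∈ t x} = ∏ x ∈ F, μ₀ (t x)

open scoped Classical in
noncomputable def tF (F : Finset X) (c : ∀ _ : F, Γ₀) (x : X) : Set Γ₀ :=
  if h : x ∈ F then {c ⟨x, h⟩} else univ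

theorem tF_measurable (F : Finset X) (c : ∀ _ : F, Γ₀) (x : X) :
    MeasurableSet (tF F c x) := by
  unfold tF
  split <;> simp

theorem setOf_tF_eq (F : Finset X) (c : ∀ _ : F, Γ₀) :
    {y : X → Γ₀ | ∀ x ∈ F, y x ∈ tF F c x}
      = cylinder (α := fun _ : X => Γ₀) F {c} := by
  ext y
  simp only [mem_setOf_eq, mem_cylinder, mem_singleton_iff, funext_iff, Finset.restrict_def]
  constructor
  · intro h i
    have := h i i.2
    rw [tF, dif_pos i.2] at this
    simpa using this
  · intro h x hx
    rw [tF, dif_pos hx]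
    exact (h ⟨x, hx⟩).symm ▸ rfl

theorem cyl_singleton (hμ : CylProp μ₀ μ) (F : Finset X) (c : ∀ _ : F, Γ₀) :
    μ (cylinder (α := fun _ : X => Γ₀) F {c}) = ∏ x ∈ F, μ₀ (tF F c x) := by
  rw [← setOf_tF_eq F c]
  exact hμ F (tF F c) (tF_measurable F c)

theorem cyl_formula [Countable Γ₀] (hμ : CylProp μ₀ μ) (F : Finset X)
    (S : Set (∀ _ : F, Γ₀)) :
    μ (cylinder (α := fun _ : X => Γ₀) F S)
      = ∑' c : S, ∏ x ∈ F, μ₀ (tF F (c : ∀ _ : F, Γ₀) x) := by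
  have hdecomp : cylinder (α := fun _ : X => Γ₀) F S
      = ⋃ c : S, cylinder (α := fun _ : X => Γ₀) F {(c : ∀ _ : F, Γ₀)} := by
    ext y
    simp only [mem_cylinder, mem_iUnion, mem_singleton_iff]
    exact ⟨fun h => ⟨⟨_, h⟩, rfl⟩, fun ⟨c, hc⟩ => hc ▸ c.2⟩
  rw [hdecomp, measure_iUnion ?_
    (fun c => MeasurableSet.cylinder F (measurableSet_singleton _))]
  · exact tsum_congr fun c => cyl_singleton hμ F _
  · intro c d hcd
    simp only [Function.onFun, Set.disjoint_left]
    intro y hy hy'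
    rw [mem_cylinder, mem_singleton_iff] at hy hy'
    exact hcd (Subtype.ext (hy ▸ hy'))

theorem cyl_unique [Countable Γ₀] [Countable X] (hμ : CylProp μ₀ μ)
    {ν : Measure (X → Γ₀)} (hν : CylProp μ₀ ν)
    [IsProbabilityMeasure μ] [IsProbabilityMeasure ν] : μ = ν := by
  refine ext_of_generate_finite (measurableCylinders fun _ : X => Γ₀)
    generateFrom_measurableCylinders.symm isPiSystem_measurableCylinders ?_ (by simp)
  intro s hs
  obtain ⟨F, S, hS, rfl⟩ := (mem_measurableCylinders s).mp hs
  rw [cyl_formula hμ, cyl_formula hν]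

theorem cyl_pair (hμ : CylProp μ₀ μ) {F G : Finset X} (hFG : Disjoint F G)
    (c : ∀ _ : F, Γ₀) (d : ∀ _ : G, Γ₀) :
    μ (cylinder (α := fun _ : X => Γ₀) F {c} ∩ cylinder (α := fun _ : X => Γ₀) G {d})
      = μ (cylinder (α := fun _ : X => Γ₀) F {c})
        * μ (cylinder (α := fun _ : X => Γ₀) G {d}) := by
  classical
  set t : X → Set Γ₀ := fun x => if h : x ∈ F then {c ⟨x, h⟩} else tF G d x with ht
  have htm : ∀ x, MeasurableSet (t x) := fun x => by
    rw [ht]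
    by_cases h : x ∈ F
    · simp [h]
    · simpa only [dif_neg h] using tF_measurable G d x
  have hset : {y : X → Γ₀ | ∀ x ∈ F ∪ G, y x ∈ t x}
      = cylinder (α := fun _ : X => Γ₀) F {c} ∩ cylinder (α := fun _ : X => Γ₀) G {d} := by
    ext y
    simp only [mem_setOf_eq, Finset.mem_union, mem_inter_iff, mem_cylinder, mem_singleton_iff,
      funext_iff, Finset.restrict_def]
    constructor
    · intro h
      constructor
      · intro i
        have := h i (Or.inl i.2)
        rw [ht] at this
        simp only [dif_pos i.2] at this
        simpa using this
      · intro i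
        have hiF : (i : X) ∉ F := Finset.disjoint_right.mp hFG i.2
        have := h i (Or.inr i.2)
        rw [ht] at this
        simp only [dif_neg hiF, tF, dif_pos i.2] at this
        simpa using this
    · rintro ⟨h1, h2⟩ x hx
      rw [ht]
      rcases hx with hx | hx
      · simp only [dif_pos hx]
        exact (h1 ⟨x, hx⟩).symm ▸ rfl
      · have hxF : x ∉ F := Finset.disjoint_right.mp hFG hx
        simp only [dif_neg hxF, tF, dif_pos hx]
        exact (h2 ⟨x, hx⟩).symm ▸ rfl
  rw [← hset, hμ _ t htm, Finset.prod_union hFG, cyl_singleton hμ, cyl_singleton hμ]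
  congr 1
  · exact Finset.prod_congr rfl fun x hx => by rw [ht]; simp [dif_pos hx, tF]
  · refine Finset.prod_congr rfl fun x hx => ?_
    have hxF : x ∉ F := Finset.disjoint_right.mp hFG hx
    rw [ht]; simp only [dif_neg hxF]

theorem cyl_indep [Countable Γ₀] (hμ : CylProp μ₀ μ) {F G : Finset X} (hFG : Disjoint F G)
    (S₁ : Set (∀ _ : F, Γ₀)) (S₂ : Set (∀ _ : G, Γ₀)) :
    μ (cylinder (α := fun _ : X => Γ₀) F S₁ ∩ cylinder (α := fun _ : X => Γ₀) G S₂)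
      = μ (cylinder (α := fun _ : X => Γ₀) F S₁)
        * μ (cylinder (α := fun _ : X => Γ₀) G S₂) := by
  have hdecomp : cylinder (α := fun _ : X => Γ₀) F S₁ ∩ cylinder (α := fun _ : X => Γ₀) G S₂
      = ⋃ p : S₁ × S₂, (cylinder (α := fun _ : X => Γ₀) F {(p.1 : ∀ _ : F, Γ₀)}
          ∩ cylinder (α := fun _ : X => Γ₀) G {(p.2 : ∀ _ : G, Γ₀)}) := by
    ext y
    simp only [mem_inter_iff, mem_cylinder, mem_iUnion, mem_singleton_iff]
    constructor
    · rintro ⟨h1, h2⟩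
      exact ⟨⟨⟨_, h1⟩, ⟨_, h2⟩⟩, rfl, rfl⟩
    · rintro ⟨p, hp1, hp2⟩
      exact ⟨hp1 ▸ p.1.2, hp2 ▸ p.2.2⟩
  rw [hdecomp, measure_iUnion, cyl_formula hμ F S₁, cyl_formula hμ G S₂]
  · have key : ∀ p : ↑S₁ × ↑S₂, μ (cylinder (α := fun _ : X => Γ₀) F {(p.1 : ∀ _ : F, Γ₀)}
        ∩ cylinder (α := fun _ : X => Γ₀) G {(p.2 : ∀ _ : G, Γ₀)})
        = (∏ x ∈ F, μ₀ (tF F (p.1 : ∀ _ : F, Γ₀) x))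
          * ∏ x ∈ G, μ₀ (tF G (p.2 : ∀ _ : G, Γ₀) x) := fun p => by
      rw [cyl_pair hμ hFG, cyl_singleton hμ, cyl_singleton hμ]
    rw [tsum_congr key, ENNReal.tsum_prod (f := fun (a : ↑S₁) (b : ↑S₂) =>
      (∏ x ∈ F, μ₀ (tF F (a : ∀ _ : F, Γ₀) x)) * ∏ x ∈ G, μ₀ (tF G (b : ∀ _ : G, Γ₀) x))]
    calc ∑' (a : ↑S₁) (b : ↑S₂), (∏ x ∈ F, μ₀ (tF F (a : ∀ _ : F, Γ₀) x))
            * ∏ x ∈ G, μ₀ (tF G (b : ∀ _ : G, Γ₀) x)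
        = ∑' (a : ↑S₁), (∏ x ∈ F, μ₀ (tF F (a : ∀ _ : F, Γ₀) x))
            * ∑' (b : ↑S₂), ∏ x ∈ G, μ₀ (tF G (b : ∀ _ : G, Γ₀) x) :=
          tsum_congr fun a => ENNReal.tsum_mul_left
      _ = _ := ENNReal.tsum_mul_right
  · intro p q hpq
    simp only [Function.onFun, Set.disjoint_left]
    rintro y ⟨hy1, hy2⟩ ⟨hy1', hy2'⟩
    rw [mem_cylinder, mem_singleton_iff] at hy1 hy2 hy1' hy2'
    exact hpq (Prod.ext (Subtype.ext (hy1 ▸ hy1')) (Subtype.ext (hy2 ▸ hy2')))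
  · exact fun p => ((MeasurableSet.cylinder F (measurableSet_singleton _)).inter
      (MeasurableSet.cylinder G (measurableSet_singleton _)))

theorem cyl_map {A : Type*} [Group A] [MulAction A X] (hμ : CylProp μ₀ μ) (a : A) :
    CylProp μ₀ (μ.map (fun (y : X → Γ₀) (x : X) => y (a⁻¹ • x))) := by
  classical
  intro F t htm
  have hmeas : Measurable (fun (y : X → Γ₀) (x : X) => y (a⁻¹ • x)) :=
    measurable_pi_lambda _ fun x => measurable_pi_apply _
  have hsetm : MeasurableSet {y : X → Γ₀ | ∀ x ∈ F, y x ∈ t x} := by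
    have heq : {y : X → Γ₀ | ∀ x ∈ F, y x ∈ t x}
        = ⋂ x ∈ (F : Set X), (fun y : X → Γ₀ => y x) ⁻¹' t x := by
      ext y; simp
    rw [heq]
    exact MeasurableSet.biInter F.countable_toSet fun x _ => (measurable_pi_apply x) (htm x)
  rw [Measure.map_apply hmeas hsetm]
  have hpre : (fun (y : X → Γ₀) (x : X) => y (a⁻¹ • x)) ⁻¹' {y : X → Γ₀ | ∀ x ∈ F, y x ∈ t x}
      = {y : X → Γ₀ | ∀ z ∈ F.image (fun x => a⁻¹ • x), y z ∈ t (a • z)} := by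
    ext y
    simp only [mem_preimage, mem_setOf_eq, Finset.mem_image]
    constructor
    · rintro h z ⟨x, hx, rfl⟩
      have := h x hx
      simpa [smul_inv_smul] using this
    · intro h x hx
      have := h (a⁻¹ • x) ⟨x, hx, rfl⟩
      simpa [smul_inv_smul] using this
  rw [hpre, hμ _ (fun z => t (a • z)) (fun z => htm _),
    Finset.prod_image (fun x _ y _ h => by simpa using congrArg (a • ·) h)]
  exact Finset.prod_congr rfl fun x _ => by rw [smul_inv_smul]

theorem abs_toReal_sub_le {Y : Type*} [MeasurableSpace Y] (μ : Measure Y)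
    [IsFiniteMeasure μ] (P Q : Set Y) :
    |(μ P).toReal - (μ Q).toReal| ≤ (μ (P ∆ Q)).toReal := by
  have hsub : ∀ R T : Set Y, R ⊆ T ∪ (R ∆ T) := by
    intro R T y hy
    by_cases h : y ∈ T
    · exact Or.inl h
    · exact Or.inr (Set.mem_symmDiff.mpr (Or.inl ⟨hy, h⟩))
  have h1 : (μ P).toReal ≤ (μ Q).toReal + (μ (P ∆ Q)).toReal := by
    have := (measure_mono (hsub P Q)).trans (measure_union_le (μ := μ) Q (P ∆ Q))
    have h2 := ENNReal.toReal_mono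
      (ENNReal.add_ne_top.mpr ⟨measure_ne_top μ Q, measure_ne_top μ (P ∆ Q)⟩) this
    rwa [ENNReal.toReal_add (measure_ne_top μ Q) (measure_ne_top μ (P ∆ Q))] at h2
  have h2 : (μ Q).toReal ≤ (μ P).toReal + (μ (P ∆ Q)).toReal := by
    have := (measure_mono (hsub Q P)).trans (measure_union_le (μ := μ) P (Q ∆ P))
    have h2 := ENNReal.toReal_mono
      (ENNReal.add_ne_top.mpr ⟨measure_ne_top μ P, measure_ne_top μ (Q ∆ P)⟩) this
    rw [ENNReal.toReal_add (measure_ne_top μ P) (measure_ne_top μ (Q ∆ P))] at h2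
    rwa [symmDiff_comm] at h2
  rw [abs_sub_le_iff]
  constructor <;> linarith

end BernoulliAux

/-- Let `Γ₀` be a countable set with a probability measure `μ₀` of full support, let `A`
act on a countable set `X` with all orbits infinite, and let `μ` be the product measure
on `Y = Γ₀^X`.  Then the generalized Bernoulli shift `(a·y)(x) = y(a⁻¹·x)` is
measure-preserving and ergodic. -/
theorem bernoulli_shift_ergodic (Γ₀ : Type*) [Countable Γ₀] [MeasurableSpace Γ₀]
    [MeasurableSingletonClass Γ₀] (μ₀ : Measure Γ₀) [IsProbabilityMeasure μ₀]
    (hfull : ∀ γ : Γ₀, 0 < μ₀ {γ})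
    (A : Type*) [Group A] (X : Type*) [Countable X] [MulAction A X]
    (horb : ∀ x : X, (MulAction.orbit A x).Infinite)
    (μ : Measure (X → Γ₀)) [IsProbabilityMeasure μ]
    (hμ : ∀ (F : Finset X) (t : X → Set Γ₀), (∀ x, MeasurableSet (t x)) →
      μ {y : X → Γ₀ | ∀ x ∈ F, y x ∈ t x} = ∏ x ∈ F, μ₀ (t x)) :
    (∀ a : A, MeasurePreserving (fun (y : X → Γ₀) (x : X) => y (a⁻¹ • x)) μ μ) ∧
    (∀ S : Set (X → Γ₀), MeasurableSet S →
      (∀ a : A, (fun (y : X → Γ₀) (x : X) => y (a⁻¹ • x)) ⁻¹' S = S) →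
      μ S = 0 ∨ μ S = 1) := by
  have hCyl : CylProp μ₀ μ := hμ
  have hmeas : ∀ a : A, Measurable (fun (y : X → Γ₀) (x : X) => y (a⁻¹ • x)) := fun a =>
    measurable_pi_lambda _ fun x => measurable_pi_apply _
  have hMP : ∀ a : A, MeasurePreserving (fun (y : X → Γ₀) (x : X) => y (a⁻¹ • x)) μ μ := by
    intro a
    refine ⟨hmeas a, ?_⟩
    haveI : IsProbabilityMeasure (μ.map (fun (y : X → Γ₀) (x : X) => y (a⁻¹ • x))) :=
      Measure.isProbabilityMeasure_map (hmeas a).aemeasurable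
    exact cyl_unique (cyl_map hCyl a) hCyl
  refine ⟨hMP, ?_⟩
  intro S hS hinv
  have halg : IsSetAlgebra (measurableCylinders fun _ : X => Γ₀) :=
    ⟨empty_mem_measurableCylinders _, fun _ h => compl_mem_measurableCylinders h,
     fun _ _ h h' => union_mem_measurableCylinders h h'⟩
  have hdense : μ.MeasureDense (measurableCylinders fun _ : X => Γ₀) :=
    Measure.MeasureDense.of_generateFrom_isSetAlgebra_finite μ halg
      generateFrom_measurableCylinders.symm
  set p := (μ S).toReal with hp
  have hp0 : 0 ≤ p := ENNReal.toReal_nonneg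
  have hp1 : p ≤ 1 := by
    rw [hp]
    exact ENNReal.toReal_le_of_le_ofReal one_pos.le (by simpa using prob_le_one)
  have key : ∀ ε : ℝ, 0 < ε → p - p * p ≤ 4 * ε := by
    intro ε hε
    obtain ⟨t, ht, hlt⟩ := hdense.approx S hS (measure_ne_top μ S) ε hε
    obtain ⟨F, S₀, hS₀, rfl⟩ := (mem_measurableCylinders t).mp ht
    obtain ⟨g, hg⟩ := aux_neumann horb F
    classical
    set F' := F.image (fun x => g • x) with hF'
    have hdisj : Disjoint F F' := by
      rw [Finset.disjoint_right]
      rintro z hz hzF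
      obtain ⟨x, hx, rfl⟩ := Finset.mem_image.mp hz
      exact hg x hx hzF
    set S₀' : Set (∀ _ : F', Γ₀) := (fun (d : ∀ _ : F', Γ₀) (x : F) =>
        d ⟨g • (x : X), Finset.mem_image_of_mem _ x.2⟩) ⁻¹' S₀ with hS₀'def
    have hS₀'m : MeasurableSet S₀' :=
      (measurable_pi_lambda _ fun x => measurable_pi_apply _) hS₀
    set C := cylinder (α := fun _ : X => Γ₀) F S₀ with hC
    set C' := cylinder (α := fun _ : X => Γ₀) F' S₀' with hC'
    have hCm : MeasurableSet C := MeasurableSet.cylinder F hS₀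
    have hC'm : MeasurableSet C' := MeasurableSet.cylinder F' hS₀'m
    have hTC : (fun (y : X → Γ₀) (x : X) => y ((g⁻¹ : A)⁻¹ • x)) ⁻¹' C = C' := by
      ext y
      simp only [hC, hC', hS₀'def, mem_preimage, mem_cylinder, Finset.restrict_def, inv_inv]
    have hMPg := hMP (g⁻¹ : A)
    have hμC' : μ C' = μ C := by
      rw [← hTC]
      exact hMPg.measure_preimage hCm.nullMeasurableSet
    have hindep : μ (C ∩ C') = μ C * μ C' := cyl_indep hCyl hdisj S₀ S₀'
    have h2 : μ (S ∆ C') = μ (S ∆ C) := by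
      have heq : S ∆ C' = (fun (y : X → Γ₀) (x : X) => y ((g⁻¹ : A)⁻¹ • x)) ⁻¹' (S ∆ C) := by
        rw [preimage_symmDiff, hinv (g⁻¹ : A), hTC]
      rw [heq]
      exact hMPg.measure_preimage (hS.symmDiff hCm).nullMeasurableSet
    have hbound1 : (μ (S ∆ C)).toReal ≤ ε :=
      ENNReal.toReal_le_of_le_ofReal hε.le hlt.le
    have hsub : S ∆ (C ∩ C') ⊆ (S ∆ C) ∪ (S ∆ C') := by
      intro y hy
      simp only [Set.mem_symmDiff, mem_inter_iff, mem_union] at *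
      tauto
    have hbound2 : (μ (S ∆ (C ∩ C'))).toReal ≤ 2 * ε := by
      have hle : μ (S ∆ (C ∩ C')) ≤ ENNReal.ofReal ε + ENNReal.ofReal ε := by
        refine ((measure_mono hsub).trans (measure_union_le _ _)).trans ?_
        exact add_le_add hlt.le (by rw [h2]; exact hlt.le)
      rw [← ENNReal.ofReal_add hε.le hε.le] at hle
      have := ENNReal.toReal_le_of_le_ofReal (by linarith) hle
      linarith
    set q := (μ C).toReal with hq
    have hq0 : 0 ≤ q := ENNReal.toReal_nonneg
    have hq1 : q ≤ 1 := by
      rw [hq]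
      exact ENNReal.toReal_le_of_le_ofReal one_pos.le (by simpa using prob_le_one)
    have habs1 : |p - q| ≤ ε := le_trans (abs_toReal_sub_le μ S C) hbound1
    have habs2 : |p - q * q| ≤ 2 * ε := by
      have h3 : (μ (C ∩ C')).toReal = q * q := by
        rw [hindep, hμC', ENNReal.toReal_mul]
      calc |p - q * q| = |(μ S).toReal - (μ (C ∩ C')).toReal| := by rw [h3, hp]
        _ ≤ (μ (S ∆ (C ∩ C'))).toReal := abs_toReal_sub_le μ S (C ∩ C')
        _ ≤ 2 * ε := hbound2
    obtain ⟨ha1, ha2⟩ := abs_le.mp habs1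
    obtain ⟨hb1, hb2⟩ := abs_le.mp habs2
    nlinarith
  have hle0 : p - p * p ≤ 0 := by
    by_contra h
    push_neg at h
    have := key ((p - p * p) / 8) (by linarith)
    linarith
  have hge0 : 0 ≤ p - p * p := by nlinarith
  have hpp : p * (1 - p) = 0 := by nlinarith
  rcases mul_eq_zero.mp hpp with h | h
  · left
    rcases (ENNReal.toReal_eq_zero_iff _).mp h with h' | h'
    · exact h'
    · exact absurd h' (measure_ne_top μ S)
  · right
    have hp1' : p = 1 := by linarith
    have := (ENNReal.toReal_eq_toReal_iff' (measure_ne_top μ S) ENNReal.one_ne_top)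
    exact this.mp (by rw [← hp, hp1']; simp)
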